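/- arXiv:2211.06455 — 2 statements merged into one kernel-verified Lean document; each statement's English description precedes it below -/
import Mathlib

section
/- Define W : R³ → R⁵ by W(θ₁,θ₂,θ₃) = (θ₁, θ₂, θ₁θ₂, θ₁θ₃, θ₁θ₂θ₃). Suppose θ₁ ≠ 0 and |θ₃| ≤ K. Then there exist α > 0 and ρ > 0 such that, with T = [[α,0,0,0,0],[0,α,0,0,0],[0,0,0,sign(θ₁),0]], the matrix T·∇W(θ) + (∇W(θ))^T T^T is ≥ ρ I₃ at the given θ. -/
open Matrix

/-- Jacobian of `W(θ₁,θ₂,θ₃) = (θ₁, θ₂, θ₁θ₂, θ₁θ₃, θ₁θ₂θ₃)` at `θ`. -/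
noncomputable def jacW (θ : Fin 3 → ℝ) : Matrix (Fin 5) (Fin 3) ℝ :=
  !![1, 0, 0;
     0, 1, 0;
     θ 1, θ 0, 0;
     θ 2, 0, θ 0;
     θ 1 * θ 2, θ 0 * θ 2, θ 0 * θ 1]

theorem statement3 (θ : Fin 3 → ℝ) (K : ℝ) (hθ1 : θ 0 ≠ 0) (hθ3 : |θ 2| ≤ K) :
    ∃ α : ℝ, 0 < α ∧ ∃ ρ : ℝ, 0 < ρ ∧
      ((!![α, 0, 0, 0, 0;
           0, α, 0, 0, 0;
           0, 0, 0, Real.sign (θ 0), 0] : Matrix (Fin 3) (Fin 5) ℝ) * jacW θ +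
        (jacW θ)ᵀ * (!![α, 0, 0, 0, 0;
           0, α, 0, 0, 0;
           0, 0, 0, Real.sign (θ 0), 0] : Matrix (Fin 3) (Fin 5) ℝ)ᵀ -
        ρ • (1 : Matrix (Fin 3) (Fin 3) ℝ)).PosSemidef := by
  have hb : 0 < |θ 0| := abs_pos.mpr hθ1
  have hs2 : Real.sign (θ 0) * Real.sign (θ 0) = 1 := by
    rcases lt_or_gt_of_ne hθ1 with h | h
    · simp [Real.sign_of_neg h]
    · simp [Real.sign_of_pos h]
  have hsθ : Real.sign (θ 0) * θ 0 = |θ 0| := by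
    rcases lt_or_gt_of_ne hθ1 with h | h
    · simp [Real.sign_of_neg h, abs_of_neg h]
    · simp [Real.sign_of_pos h, abs_of_pos h]
  have ht : (θ 2) ^ 2 / |θ 0| * |θ 0| = (θ 2) ^ 2 := by
    field_simp
  set a : ℝ := (θ 2) ^ 2 / |θ 0| + |θ 0| with ha
  have ha0 : 0 < a := by positivity
  refine ⟨a, ha0, |θ 0|, hb, ?_⟩
  have hN : (!![a, 0, 0, 0, 0;
           0, a, 0, 0, 0;
           0, 0, 0, Real.sign (θ 0), 0] : Matrix (Fin 3) (Fin 5) ℝ) * jacW θ =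
      !![a, 0, 0; 0, a, 0; Real.sign (θ 0) * θ 2, 0, |θ 0|] := by
    ext i j
    fin_cases i <;> fin_cases j <;>
      simp [jacW, Matrix.mul_apply, Fin.sum_univ_five, hsθ]
  have hM : ((!![a, 0, 0, 0, 0;
           0, a, 0, 0, 0;
           0, 0, 0, Real.sign (θ 0), 0] : Matrix (Fin 3) (Fin 5) ℝ) * jacW θ +
        (jacW θ)ᵀ * (!![a, 0, 0, 0, 0;
           0, a, 0, 0, 0;
           0, 0, 0, Real.sign (θ 0), 0] : Matrix (Fin 3) (Fin 5) ℝ)ᵀ -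
        |θ 0| • (1 : Matrix (Fin 3) (Fin 3) ℝ)) =
      !![2 * a - |θ 0|, 0, Real.sign (θ 0) * θ 2;
         0, 2 * a - |θ 0|, 0;
         Real.sign (θ 0) * θ 2, 0, |θ 0|] := by
    rw [← Matrix.transpose_mul, hN]
    ext i j
    simp only [Matrix.sub_apply, Matrix.add_apply, Matrix.transpose_apply, Matrix.smul_apply,
      smul_eq_mul]
    fin_cases i <;> fin_cases j <;> simp [Matrix.one_apply] <;> ring
  rw [hM]
  rw [Matrix.posSemidef_iff_dotProduct_mulVec]
  constructor
  · ext i j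
    fin_cases i <;> fin_cases j <;> simp
  · intro x
    simp only [Matrix.mulVec, dotProduct, Fin.sum_univ_three, Pi.star_apply,
      star_trivial, Matrix.cons_val', Matrix.cons_val_zero, Matrix.cons_val_one,
      Matrix.head_cons, Matrix.empty_val', Matrix.cons_val_fin_one, Matrix.head_fin_const,
      Matrix.of_apply, Matrix.cons_val_two, Matrix.tail_cons]
    have hc : (2 * a - |θ 0|) * |θ 0| = 2 * θ 2 ^ 2 + |θ 0| ^ 2 := by
      rw [ha]; field_simp; ring
    nlinarith [sq_nonneg (|θ 0| * x 2 + Real.sign (θ 0) * θ 2 * x 0), hs2, hc, hb,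
      mul_nonneg (mul_nonneg hb.le hb.le) (sq_nonneg (x 1)),
      mul_nonneg (sq_nonneg (θ 2)) (sq_nonneg (x 1)),
      mul_nonneg (sq_nonneg (θ 2)) (sq_nonneg (x 0)),
      sq_nonneg (x 0), sq_nonneg (x 1), mul_pos hb hb]
end

section
/- Let φ : [0,∞) → R^s be continuous with ∫₀^{t_c} φφ^T ds ≥ C_c I_s (C_c, t_c > 0), and let F solve Ḟ = −γFφφ^TF, F(0) = (1/f₀)I_s with γ, f₀ > 0. Then for t ≥ t_c, the smallest eigenvalue of I_s − f₀F(t) is at least γC_c/(f₀ + γC_c), and consequently Δ(t) = det(I_s − f₀F(t)) ≥ (γC_c/(f₀+γC_c))^s > 0. -/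
open Matrix Set

set_option maxHeartbeats 1000000

-- quadratic form of interval integral matrix is nonneg
lemma psd_integral_aux {s : ℕ} (φ : ℝ → Fin s → ℝ) (hφ : Continuous φ)
    (u t : ℝ) (h : u ≤ t) (x : Fin s → ℝ) :
    0 ≤ x ⬝ᵥ ((Matrix.of fun i j => ∫ τ in u..t, φ τ i * φ τ j) *ᵥ x) := by
  have hφi : ∀ i, Continuous fun τ => φ τ i := fun i => (continuous_apply i).comp hφ
  have hint : ∀ i j : Fin s, IntervalIntegrable (fun τ => x i * φ τ i * (x j * φ τ j))
      MeasureTheory.volume u t := fun i j =>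
    (((continuous_const.mul (hφi i)).mul (continuous_const.mul (hφi j)))).intervalIntegrable u t
  have key : x ⬝ᵥ ((Matrix.of fun i j => ∫ τ in u..t, φ τ i * φ τ j) *ᵥ x)
      = ∫ τ in u..t, (∑ i, x i * φ τ i) ^ 2 := by
    have e1 : ∀ i j : Fin s, x i * (∫ τ in u..t, φ τ i * φ τ j) * x j
        = ∫ τ in u..t, x i * φ τ i * (x j * φ τ j) := by
      intro i j
      rw [← intervalIntegral.integral_const_mul, ← intervalIntegral.integral_mul_const]
      congr 1; ext τ; ring
    have e2 : x ⬝ᵥ ((Matrix.of fun i j => ∫ τ in u..t, φ τ i * φ τ j) *ᵥ x)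
        = ∑ i, ∑ j, x i * (∫ τ in u..t, φ τ i * φ τ j) * x j := by
      simp [dotProduct, mulVec, Finset.mul_sum, mul_assoc]
    rw [e2]
    simp_rw [e1]
    have e3 : ∀ i : Fin s, ∑ j, ∫ τ in u..t, x i * φ τ i * (x j * φ τ j)
        = ∫ τ in u..t, ∑ j, x i * φ τ i * (x j * φ τ j) := fun i =>
      (intervalIntegral.integral_finset_sum (fun j _ => hint i j)).symm
    simp_rw [e3]
    have e4 : (∫ τ in u..t, ∑ i, ∑ j, x i * φ τ i * (x j * φ τ j))
        = ∑ i : Fin s, ∫ τ in u..t, ∑ j, x i * φ τ i * (x j * φ τ j) :=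
      intervalIntegral.integral_finset_sum (fun i _ =>
        (Continuous.intervalIntegrable (continuous_finset_sum _ (fun j _ =>
          (continuous_const.mul (hφi i)).mul (continuous_const.mul (hφi j)))) u t))
    rw [← e4]
    refine intervalIntegral.integral_congr fun τ _ => ?_
    rw [sq, Finset.sum_mul_sum]
  rw [key]
  exact intervalIntegral.integral_nonneg h (fun τ _ => sq_nonneg _)

lemma det_ge_aux {s : ℕ} {c : ℝ} (hc : 0 ≤ c) (A : Matrix (Fin s) (Fin s) ℝ)
    (hA : A.IsHermitian) (h : (A - c • 1).PosSemidef) : c ^ s ≤ A.det := by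
  have hev : ∀ i, c ≤ hA.eigenvalues i := by
    intro i
    have hv := hA.mulVec_eigenvectorBasis i
    set v : Fin s → ℝ := ⇑(hA.eigenvectorBasis i) with hvdef
    have hnorm : v ⬝ᵥ v = 1 := by
      have h1 : ‖hA.eigenvectorBasis i‖ = 1 := hA.eigenvectorBasis.orthonormal.1 i
      have h2 : (inner ℝ (hA.eigenvectorBasis i) (hA.eigenvectorBasis i) : ℝ) = 1 := by
        rw [real_inner_self_eq_norm_sq, h1]; norm_num
      rw [← h2, PiLp.inner_apply]
      simp [dotProduct, v, mul_comm, sq]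
    have h0 := h.dotProduct_mulVec_nonneg v
    rw [sub_mulVec, dotProduct_sub, hv] at h0
    have hsm : (c • (1 : Matrix (Fin s) (Fin s) ℝ)) *ᵥ v = c • v := by
      rw [smul_mulVec, one_mulVec]
    rw [hsm] at h0
    simp only [star_trivial, dotProduct_smul, smul_eq_mul, hnorm, mul_one] at h0
    linarith
  have hdet : A.det = ∏ i, hA.eigenvalues i := by
    simpa using hA.det_eq_prod_eigenvalues
  rw [hdet]
  calc c ^ s = ∏ _i : Fin s, c := by simp
    _ ≤ ∏ i, hA.eigenvalues i :=
      Finset.prod_le_prod (fun i _ => hc) (fun i _ => hev i)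

theorem statement19 {s : ℕ} (F : ℝ → Matrix (Fin s) (Fin s) ℝ) (φ : ℝ → Fin s → ℝ)
    (γ f₀ C_c t_c : ℝ) (hγ : 0 < γ) (hf₀ : 0 < f₀) (hCc : 0 < C_c) (htc : 0 < t_c)
    (hφc : Continuous φ)
    (hF0 : F 0 = (1 / f₀) • (1 : Matrix (Fin s) (Fin s) ℝ))
    (hODE : ∀ t ∈ Set.Ici (0:ℝ), ∀ i j,
      HasDerivWithinAt (fun τ => F τ i j)
        ((-(γ • (F t * Matrix.vecMulVec (φ t) (φ t) * F t))) i j) (Set.Ici 0) t)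
    (hIE : ((Matrix.of fun i j => ∫ τ in (0:ℝ)..t_c, φ τ i * φ τ j) -
      C_c • (1 : Matrix (Fin s) (Fin s) ℝ)).PosSemidef) :
    ∀ t, t_c ≤ t →
      (((1 : Matrix (Fin s) (Fin s) ℝ) - f₀ • F t) -
        (γ * C_c / (f₀ + γ * C_c)) • (1 : Matrix (Fin s) (Fin s) ℝ)).PosSemidef ∧
      (γ * C_c / (f₀ + γ * C_c)) ^ s ≤ ((1 : Matrix (Fin s) (Fin s) ℝ) - f₀ • F t).det ∧
      0 < (γ * C_c / (f₀ + γ * C_c)) ^ s := by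
  set β : ℝ := f₀ + γ * C_c with hβdef
  have hβ : 0 < β := by positivity
  set c : ℝ := γ * C_c / β with hcdef
  have hc0 : 0 < c := by positivity
  set M : ℝ → Matrix (Fin s) (Fin s) ℝ :=
    fun t => Matrix.of fun i j => ∫ τ in (0:ℝ)..t, φ τ i * φ τ j with hMdef
  set B : ℝ → Matrix (Fin s) (Fin s) ℝ := fun t => f₀ • 1 + γ • M t with hBdef
  have hφi : ∀ i, Continuous fun τ => φ τ i := fun i => (continuous_apply i).comp hφc
  have hφij : ∀ i j : Fin s, Continuous fun τ => φ τ i * φ τ j :=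
    fun i j => (hφi i).mul (hφi j)
  -- symmetry of M
  have hMsymm : ∀ u : ℝ, (M u)ᵀ = M u := by
    intro u; ext i j
    simp only [hMdef, transpose_apply, of_apply, mul_comm]
  -- derivative of M entries
  have hMd : ∀ (t : ℝ) (i j : Fin s), HasDerivAt (fun τ => M τ i j) (φ t i * φ t j) t := by
    intro t i j
    exact ((hφij i j).integral_hasStrictDerivAt 0 t).hasDerivAt
  -- key: F t * B t = 1 for t ≥ 0
  have hFc : ∀ i j : Fin s, ContinuousOn (fun τ => F τ i j) (Ici 0) :=
    fun i j u hu => (hODE u hu i j).continuousWithinAt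
  have key : ∀ b : ℝ, 0 ≤ b → F b * B b = 1 := by
    intro b hb
    set g : ℝ → Fin s → Fin s → ℝ := fun τ i j => (F τ * B τ - 1) i j with hgdef
    set L : ℝ → Matrix (Fin s) (Fin s) ℝ :=
      fun τ => -(γ • (F τ * vecMulVec (φ τ) (φ τ))) with hLdef
    set g' : ℝ → Fin s → Fin s → ℝ := fun τ i j => (L τ * (F τ * B τ - 1)) i j with hg'def
    have entry : ∀ u ∈ Ici (0:ℝ), ∀ i j,
        HasDerivWithinAt (fun τ => g τ i j) (g' u i j) (Ici 0) u := by
      intro u hu i j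
      have hBkj : ∀ k, HasDerivWithinAt (fun τ => B τ k j) (γ * (φ u k * φ u j)) (Ici 0) u := by
        intro k
        have h1 : HasDerivAt (fun τ => (f₀ • (1:Matrix (Fin s) (Fin s) ℝ)) k j + γ * M τ k j)
            (γ * (φ u k * φ u j)) u := ((hMd u k j).const_mul γ).const_add _
        have h2 : (fun τ => B τ k j)
            = fun τ => (f₀ • (1:Matrix (Fin s) (Fin s) ℝ)) k j + γ * M τ k j := by
          funext τ
          simp [hBdef, Matrix.add_apply, Matrix.smul_apply, smul_eq_mul]
        rw [h2]
        exact h1.hasDerivWithinAt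
      have hsum : HasDerivWithinAt (fun τ => ∑ k, F τ i k * B τ k j)
          (∑ k, ((-(γ • (F u * vecMulVec (φ u) (φ u) * F u))) i k * B u k j
            + F u i k * (γ * (φ u k * φ u j)))) (Ici 0) u :=
        HasDerivWithinAt.fun_sum fun k _ => (hODE u hu i k).mul (hBkj k)
      have hder := hsum.sub_const ((1:Matrix (Fin s) (Fin s) ℝ) i j)
      have hgfun : (fun τ => g τ i j)
          = fun τ => (∑ k, F τ i k * B τ k j) - (1:Matrix (Fin s) (Fin s) ℝ) i j := by
        funext τ; simp [hgdef, Matrix.sub_apply, Matrix.mul_apply]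
      rw [← hgfun] at hder
      have hmat : L u * (F u * B u - 1)
          = -(γ • (F u * vecMulVec (φ u) (φ u) * F u)) * B u
            + γ • (F u * vecMulVec (φ u) (φ u)) := by
        rw [hLdef]
        rw [Matrix.mul_sub, Matrix.mul_one, sub_neg_eq_add]
        congr 1
        rw [Matrix.neg_mul, Matrix.neg_mul]
        congr 1
        rw [smul_mul_assoc, smul_mul_assoc]
        congr 1
        exact (Matrix.mul_assoc (F u * vecMulVec (φ u) (φ u)) (F u) (B u)).symm
      have hval : (∑ k, ((-(γ • (F u * vecMulVec (φ u) (φ u) * F u))) i k * B u k j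
            + F u i k * (γ * (φ u k * φ u j)))) = g' u i j := by
        rw [hg'def]
        show _ = (L u * (F u * B u - 1)) i j
        have hA : (∑ k, (-(γ • (F u * vecMulVec (φ u) (φ u) * F u))) i k * B u k j)
            = (-(γ • (F u * vecMulVec (φ u) (φ u) * F u)) * B u) i j :=
          (Matrix.mul_apply).symm
        have hB2 : (∑ k, F u i k * (γ * (φ u k * φ u j)))
            = (γ • (F u * vecMulVec (φ u) (φ u))) i j := by
          simp only [Matrix.smul_apply, Matrix.mul_apply, vecMulVec_apply, smul_eq_mul,
            Finset.mul_sum]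
          exact Finset.sum_congr rfl fun k _ => by ring
        rw [hmat, Matrix.add_apply, Finset.sum_add_distrib, hA, hB2]
      rwa [hval] at hder
    have hgd : ∀ u ∈ Ico (0:ℝ) b, HasDerivWithinAt g (g' u) (Ici u) u := by
      intro u hu
      have h1 : HasDerivWithinAt g (g' u) (Ici 0) u :=
        hasDerivWithinAt_pi.2 fun i => hasDerivWithinAt_pi.2 fun j => entry u hu.1 i j
      exact h1.mono (Ici_subset_Ici.mpr hu.1)
    have hgc : ContinuousOn g (Icc 0 b) := by
      intro u hu
      have h1 : ContinuousWithinAt g (Ici 0) u :=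
        continuousWithinAt_pi.2 fun i => continuousWithinAt_pi.2 fun j =>
          (entry u hu.1 i j).continuousWithinAt
      exact h1.mono Icc_subset_Ici_self
    -- bound on L over Icc 0 b
    have hℓc : @ContinuousOn ℝ (Fin s → Fin s → ℝ) _ _ (fun τ i k => L τ i k) (Icc 0 b) := by
      refine continuousOn_pi.2 fun i => continuousOn_pi.2 fun k => ?_
      have heq : (fun τ => L τ i k) = fun τ => -(γ * ∑ m, F τ i m * (φ τ m * φ τ k)) := by
        funext τ
        simp [hLdef, Matrix.neg_apply, Matrix.smul_apply, Matrix.mul_apply,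
          vecMulVec_apply, smul_eq_mul]
      show ContinuousOn (fun τ => L τ i k) (Icc 0 b)
      rw [heq]
      refine ContinuousOn.neg (continuousOn_const.mul
        (continuousOn_finset_sum _ fun m _ => ContinuousOn.mul ?_ ?_))
      · exact (hFc i m).mono Icc_subset_Ici_self
      · exact ((hφi m).mul (hφi k)).continuousOn
    obtain ⟨C, hC⟩ :=
      (isCompact_Icc : IsCompact (Icc (0:ℝ) b)).exists_bound_of_continuousOn hℓc
    have hC0 : 0 ≤ C := le_trans (norm_nonneg _) (hC 0 (left_mem_Icc.2 hb))
    have hLentry : ∀ u ∈ Icc (0:ℝ) b, ∀ i k, ‖L u i k‖ ≤ C := by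
      intro u hu i k
      calc ‖L u i k‖ ≤ ‖fun k' => L u i k'‖ := norm_le_pi_norm (fun k' => L u i k') k
        _ ≤ ‖fun i' (k' : Fin s) => L u i' k'‖ :=
            norm_le_pi_norm (fun i' (k' : Fin s) => L u i' k') i
        _ ≤ C := hC u hu
    have bound : ∀ u ∈ Ico (0:ℝ) b, ‖g' u‖ ≤ (s * C) * ‖g u‖ + 0 := by
      intro u hu
      rw [add_zero]
      have hnn : (0:ℝ) ≤ (s * C) * ‖g u‖ := by positivity
      refine (pi_norm_le_iff_of_nonneg hnn).2 fun i => ?_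
      refine (pi_norm_le_iff_of_nonneg hnn).2 fun j => ?_
      have heq : g' u i j = ∑ k, L u i k * g u k j := by
        rw [hg'def]
        show (L u * (F u * B u - 1)) i j = _
        rw [Matrix.mul_apply]
      rw [heq]
      calc ‖∑ k, L u i k * g u k j‖ ≤ ∑ k, ‖L u i k * g u k j‖ := norm_sum_le _ _
        _ ≤ ∑ _k : Fin s, C * ‖g u‖ := by
            refine Finset.sum_le_sum fun k _ => ?_
            rw [norm_mul]
            have h1 : ‖L u i k‖ ≤ C := hLentry u (Ico_subset_Icc_self hu) i k
            have h2 : ‖g u k j‖ ≤ ‖g u‖ :=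
              le_trans (norm_le_pi_norm (g u k) j) (norm_le_pi_norm (g u) k)
            exact mul_le_mul h1 h2 (norm_nonneg _) hC0
        _ = (s * C) * ‖g u‖ := by
            rw [Finset.sum_const, Finset.card_univ, Fintype.card_fin, nsmul_eq_mul]
            ring
    have hg0 : g 0 = 0 := by
      funext i j
      have hM0 : M 0 = 0 := by
        ext i' j'
        simp [hMdef, intervalIntegral.integral_same]
      show (F 0 * B 0 - 1) i j = 0
      rw [hBdef]
      show (F 0 * (f₀ • 1 + γ • M 0) - 1) i j = 0
      rw [hM0, hF0]
      simp only [smul_zero, add_zero, Matrix.smul_mul, Matrix.mul_smul, Matrix.one_mul,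
        smul_smul, one_div]
      rw [mul_inv_cancel₀ hf₀.ne']
      simp
    have hgron := norm_le_gronwallBound_of_norm_deriv_right_le hgc hgd
      (by rw [hg0, norm_zero]) bound b (right_mem_Icc.2 hb)
    have hle : ‖g b‖ ≤ 0 := by
      simpa [gronwallBound_ε0] using hgron
    have hgb : g b = 0 := norm_le_zero_iff.1 hle
    ext i j
    have hij := congrFun (congrFun hgb i) j
    have : (F b * B b - 1) i j = 0 := hij
    have := sub_eq_zero.1 (by simpa [Matrix.sub_apply] using this)
    simpa using this
  -- main part
  intro t ht
  have ht0 : (0:ℝ) ≤ t := le_trans htc.le ht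
  have hFB : F t * B t = 1 := key t ht0
  have hBF : B t * F t = 1 := mul_eq_one_comm.mp hFB
  -- symmetry of B and F
  have hBsymm : (B t)ᵀ = B t := by
    simp only [hBdef, transpose_add, transpose_smul, transpose_one, hMsymm]
  have hBH : (B t).IsHermitian := by
    rwa [Matrix.IsHermitian, conjTranspose_eq_transpose_of_trivial]
  have hFH : (F t)ᴴ = F t := by
    have h1 : (F t)ᴴ * B t = 1 := by
      have := congrArg conjTranspose hBF
      rwa [conjTranspose_mul, conjTranspose_one, hBH] at this
    calc (F t)ᴴ = (F t)ᴴ * (B t * F t) := by rw [hBF, Matrix.mul_one]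
      _ = ((F t)ᴴ * B t) * F t := by rw [Matrix.mul_assoc]
      _ = F t := by rw [h1, Matrix.one_mul]
  have hFsymm : (F t)ᵀ = F t := by
    rwa [conjTranspose_eq_transpose_of_trivial] at hFH
  -- D := B t - β • 1 is PSD
  set D : Matrix (Fin s) (Fin s) ℝ := B t - β • 1 with hDdef
  have hDsymm : Dᵀ = D := by
    simp only [hDdef, transpose_sub, hBsymm, transpose_smul, transpose_one]
  have hDH : D.IsHermitian := by
    rwa [Matrix.IsHermitian, conjTranspose_eq_transpose_of_trivial]
  have hDpsd : D.PosSemidef := by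
    refine PosSemidef.of_dotProduct_mulVec_nonneg hDH fun x => ?_
    have hDeq : D = γ • ((M t - M t_c) + (M t_c - C_c • 1)) := by
      simp only [hDdef, hBdef, hβdef]
      rw [smul_add]
      ext i j
      simp only [Matrix.add_apply, Matrix.sub_apply, Matrix.smul_apply, smul_eq_mul]
      ring
    rw [hDeq]
    have h1 : 0 ≤ x ⬝ᵥ ((M t - M t_c) *ᵥ x) := by
      have heq : M t - M t_c = Matrix.of fun i j => ∫ τ in t_c..t, φ τ i * φ τ j := by
        ext i j
        simp only [hMdef, Matrix.sub_apply, of_apply]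
        exact intervalIntegral.integral_interval_sub_left
          ((hφij i j).intervalIntegrable 0 t) ((hφij i j).intervalIntegrable 0 t_c)
      rw [heq]
      exact psd_integral_aux φ hφc t_c t ht x
    have h2 : 0 ≤ x ⬝ᵥ ((M t_c - C_c • 1) *ᵥ x) := by
      have := hIE.dotProduct_mulVec_nonneg x
      simpa [hMdef] using this
    have : 0 ≤ x ⬝ᵥ (((M t - M t_c) + (M t_c - C_c • 1)) *ᵥ x) := by
      rw [Matrix.add_mulVec, dotProduct_add]
      exact add_nonneg h1 h2
    simp only [star_trivial]
    rw [smul_mulVec, dotProduct_smul, smul_eq_mul]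
    exact mul_nonneg hγ.le this
  -- quadratic form inequality : (1/β) • 1 - F t is PSD
  have hQH : ((1/β) • (1 : Matrix (Fin s) (Fin s) ℝ) - F t).IsHermitian := by
    rw [Matrix.IsHermitian, conjTranspose_sub, conjTranspose_smul, conjTranspose_one, hFH]
    simp
  have hQpsd : ((1/β) • (1 : Matrix (Fin s) (Fin s) ℝ) - F t).PosSemidef := by
    refine PosSemidef.of_dotProduct_mulVec_nonneg hQH fun x => ?_
    set y : Fin s → ℝ := F t *ᵥ x with hydef
    have e1 : B t *ᵥ y = x := by
      rw [hydef, mulVec_mulVec, hBF, one_mulVec]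
    -- the product matrix is PSD
    have hprod : (β • D + D * D).PosSemidef := by
      refine Matrix.PosSemidef.add (PosSemidef.of_dotProduct_mulVec_nonneg ?_ fun z => ?_) ?_
      · rw [Matrix.IsHermitian, conjTranspose_smul, hDH]; simp
      · rw [smul_mulVec, dotProduct_smul, smul_eq_mul]
        exact mul_nonneg hβ.le (hDpsd.dotProduct_mulVec_nonneg z)
      · have : D * D = Dᴴ * D := by rw [hDH]
        rw [this]
        exact posSemidef_conjTranspose_mul_self D
    have hBB : B t * B t - β • B t = β • D + D * D := by
      calc B t * B t - β • B t = B t * (B t - β • 1) := by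
            rw [Matrix.mul_sub, Matrix.mul_smul, Matrix.mul_one]
        _ = (D + β • 1) * D := by rw [← hDdef, hDdef, sub_add_cancel]
        _ = D * D + β • D := by rw [Matrix.add_mul, Matrix.smul_mul, Matrix.one_mul]
        _ = β • D + D * D := add_comm _ _
    simp only [star_trivial]
    rw [sub_mulVec, dotProduct_sub, smul_mulVec, one_mulVec, dotProduct_smul, smul_eq_mul]
    have e2 : x ⬝ᵥ (F t *ᵥ x) = (B t *ᵥ y) ⬝ᵥ y := by
      rw [← hydef]
      conv_lhs => rw [← e1]
    have e3 : x ⬝ᵥ x = ((B t * B t) *ᵥ y) ⬝ᵥ y := by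
      conv_lhs => rw [← e1]
      rw [dotProduct_mulVec, ← mulVec_transpose, hBsymm, mulVec_mulVec]
    have e4 : ((B t * B t) *ᵥ y) ⬝ᵥ y - β * ((B t *ᵥ y) ⬝ᵥ y)
        = ((β • D + D * D) *ᵥ y) ⬝ᵥ y := by
      rw [← hBB, sub_mulVec, sub_dotProduct, smul_mulVec, smul_dotProduct, smul_eq_mul]
    have e5 : 0 ≤ ((β • D + D * D) *ᵥ y) ⬝ᵥ y := by
      have := hprod.dotProduct_mulVec_nonneg y
      rwa [star_trivial, dotProduct_comm] at this
    have h6 : 0 ≤ (1/β) * (((B t * B t) *ᵥ y) ⬝ᵥ y - β * ((B t *ᵥ y) ⬝ᵥ y)) :=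
      mul_nonneg (by positivity) (by rw [e4]; exact e5)
    have h7 : (1/β) * (((B t * B t) *ᵥ y) ⬝ᵥ y - β * ((B t *ᵥ y) ⬝ᵥ y))
        = (1/β) * (((B t * B t) *ᵥ y) ⬝ᵥ y) - ((B t *ᵥ y) ⬝ᵥ y) := by
      field_simp
    rw [e2, e3]
    linarith
  -- assemble
  have hT1 : ((1 : Matrix (Fin s) (Fin s) ℝ) - f₀ • F t) - c • 1
      = f₀ • ((1/β) • (1 : Matrix (Fin s) (Fin s) ℝ) - F t) := by
    rw [smul_sub, smul_smul]
    have h8 : f₀ * (1/β) = 1 - c := by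
      rw [hcdef, hβdef]; field_simp; ring
    rw [h8]
    ext i j
    simp only [Matrix.sub_apply, Matrix.smul_apply, Matrix.one_apply, smul_eq_mul]
    by_cases hij : i = j <;> simp [hij] <;> ring
  have hPSD1 : (((1 : Matrix (Fin s) (Fin s) ℝ) - f₀ • F t) - c • 1).PosSemidef := by
    rw [hT1]
    refine PosSemidef.of_dotProduct_mulVec_nonneg ?_ fun x => ?_
    · rw [Matrix.IsHermitian, conjTranspose_smul, hQH]
      simp
    · rw [smul_mulVec, dotProduct_smul, smul_eq_mul]
      exact mul_nonneg hf₀.le (hQpsd.dotProduct_mulVec_nonneg x)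
  have hAH : ((1 : Matrix (Fin s) (Fin s) ℝ) - f₀ • F t).IsHermitian := by
    rw [Matrix.IsHermitian, conjTranspose_sub, conjTranspose_smul, conjTranspose_one, hFH]
    simp
  exact ⟨hPSD1, det_ge_aux hc0.le _ hAH hPSD1, by positivity⟩
end
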